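/- arXiv:2311.12231 — 2 statements merged into one kernel-verified Lean document; each statement's English description precedes it below -/
import Mathlib

section
/- Let B be the unit ball of a Minkowski norm on an n-dimensional real vector space V and let X be a k-dimensional linear subspace of V with k < n. Suppose that for every (k+1)-dimensional linear subspace W of V containing X, the intersection B ∩ W is locally cylindrical near X (as a subset of W). Then B is locally cylindrical near X. -/
open Module Set Pointwise

/-- The Grassmannian of `k`-dimensional linear subspaces of `V`. -/
abbrev Gr (k : ℕ) (V : Type*) [AddCommGroup V] [Module ℝ V] :=
  {X : Submodule ℝ V // Module.finrank ℝ X = k}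

/-- The standard (quotient) topology on the Grassmannian, coinduced from the space of
linearly independent `k`-tuples of vectors. -/
noncomputable instance grTop (k : ℕ) (V : Type*) [AddCommGroup V] [Module ℝ V]
    [TopologicalSpace V] : TopologicalSpace (Gr k V) :=
  TopologicalSpace.coinduced
    (fun v : {v : Fin k → V // LinearIndependent ℝ v} =>
      (⟨Submodule.span ℝ (Set.range v.1), by
          rw [finrank_span_eq_card v.2, Fintype.card_fin]⟩ : Gr k V))
    inferInstance

/-- A convex body: a compact convex set with nonempty interior. -/
def IsConvexBody {V : Type*} [AddCommGroup V] [Module ℝ V] [TopologicalSpace V]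
    (B : Set V) : Prop :=
  IsCompact B ∧ Convex ℝ B ∧ (interior B).Nonempty

/-- `C` is a `k`-cylinder with base `K` lying in the `k`-dimensional subspace `X`:
`K` is a `k`-dimensional convex body in `X` and `C = K + Y` for some complement `Y` of `X`. -/
def IsCylinderWithBase {V : Type*} [AddCommGroup V] [Module ℝ V] [TopologicalSpace V]
    (k : ℕ) (C K : Set V) (X : Submodule ℝ V) : Prop :=
  Module.finrank ℝ X = k ∧ K ⊆ (X : Set V) ∧ IsCompact K ∧ Convex ℝ K ∧
    (interior ((↑) ⁻¹' K : Set X)).Nonempty ∧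
    ∃ Y : Submodule ℝ V, IsCompl X Y ∧ C = K + (Y : Set V)

/-- `C` is a `k`-cylinder. -/
def IsCylinder {V : Type*} [AddCommGroup V] [Module ℝ V] [TopologicalSpace V]
    (k : ℕ) (C : Set V) : Prop :=
  ∃ (K : Set V) (X : Submodule ℝ V), IsCylinderWithBase k C K X

/-- Two sets coincide near a subspace `X`. -/
def CoincideNear {V : Type*} [AddCommGroup V] [Module ℝ V] [TopologicalSpace V]
    (B₁ B₂ : Set V) (X : Submodule ℝ V) : Prop :=
  ∃ U : Set V, IsOpen U ∧ (X : Set V) ⊆ U ∧ B₁ ∩ U = B₂ ∩ U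

/-- `B` is locally cylindrical near `X`. -/
def IsLocallyCylindricalNear {V : Type*} [AddCommGroup V] [Module ℝ V] [TopologicalSpace V]
    (k : ℕ) (B : Set V) (X : Submodule ℝ V) : Prop :=
  ∃ C : Set V, IsCylinder k C ∧ CoincideNear B C X

/-- A Minkowski seminorm: nonnegative, positively 1-homogeneous and subadditive. -/
def IsMinkowskiSeminorm {V : Type*} [AddCommGroup V] [Module ℝ V] (Φ : V → ℝ) : Prop :=
  (∀ v, 0 ≤ Φ v) ∧ (∀ (c : ℝ) (v : V), 0 ≤ c → Φ (c • v) = c * Φ v) ∧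
    ∀ v w, Φ (v + w) ≤ Φ v + Φ w

/-- A Minkowski norm: a Minkowski seminorm positive outside the origin. -/
def IsMinkowskiNorm {V : Type*} [AddCommGroup V] [Module ℝ V] (Φ : V → ℝ) : Prop :=
  IsMinkowskiSeminorm Φ ∧ ∀ v : V, v ≠ 0 → 0 < Φ v

/-- `X` is `Φ`-contracting with contracting direction `Y`. -/
def IsContractingWithDirection {V : Type*} [AddCommGroup V] [Module ℝ V]
    (Φ : V → ℝ) (X Y : Submodule ℝ V) : Prop :=
  ∃ h : IsCompl X Y, ∀ v : V, Φ (X.linearProjOfIsCompl Y h v : V) ≤ Φ v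

/-- `X` is `Φ`-contracting: there is a linear projector of `V` onto `X`
that does not increase `Φ`. -/
def IsContracting {V : Type*} [AddCommGroup V] [Module ℝ V]
    (Φ : V → ℝ) (X : Submodule ℝ V) : Prop :=
  ∃ P : V →ₗ[ℝ] V, P ∘ₗ P = P ∧ LinearMap.range P = X ∧ ∀ v, Φ (P v) ≤ Φ v

/-- `K` is a 0-centered ellipsoid in the subspace `X`: the unit ball of an
inner product norm on `X`. -/
def IsEllipsoidIn {V : Type*} [AddCommGroup V] [Module ℝ V]
    (X : Submodule ℝ V) (K : Set V) : Prop :=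
  ∃ Q : QuadraticForm ℝ X, Q.PosDef ∧ K = (↑) '' {x : X | Q x ≤ 1}

section MinkAux

variable {E : Type*} [NormedAddCommGroup E] [NormedSpace ℝ E]

lemma mink_zero {Φ : E → ℝ} (h : IsMinkowskiSeminorm Φ) : Φ 0 = 0 := by
  simpa using h.2.1 0 0 le_rfl

lemma mink_convex {Φ : E → ℝ} (h : IsMinkowskiSeminorm Φ) : Convex ℝ {v : E | Φ v ≤ 1} := by
  intro x hx y hy a b ha hb hab
  have h1 : Φ (a • x + b • y) ≤ a * Φ x + b * Φ y := by
    calc Φ (a • x + b • y) ≤ Φ (a • x) + Φ (b • y) := h.2.2 _ _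
    _ = a * Φ x + b * Φ y := by rw [h.2.1 _ _ ha, h.2.1 _ _ hb]
  have hx' : Φ x ≤ 1 := hx
  have hy' : Φ y ≤ 1 := hy
  have : a * Φ x + b * Φ y ≤ 1 := by nlinarith
  exact le_trans h1 this

lemma mink_le_norm [FiniteDimensional ℝ E] {Φ : E → ℝ} (h : IsMinkowskiSeminorm Φ) :
    ∃ C : ℝ, 0 < C ∧ ∀ v, Φ v ≤ C * ‖v‖ := by
  classical
  set b : Basis (Fin (finrank ℝ E)) ℝ E := finBasis ℝ E with hb
  have hsum : ∀ (s : Finset (Fin (finrank ℝ E))) (g : Fin (finrank ℝ E) → E),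
      Φ (∑ i ∈ s, g i) ≤ ∑ i ∈ s, Φ (g i) := by
    intro s g
    induction s using Finset.cons_induction with
    | empty => simp [mink_zero h]
    | cons a s ha ih =>
      rw [Finset.sum_cons, Finset.sum_cons]
      exact le_trans (h.2.2 _ _) (by linarith)
  have habs : ∀ (c : ℝ) (w : E), Φ (c • w) ≤ |c| * (Φ w + Φ (-w)) := by
    intro c w
    rcases le_or_gt 0 c with hc | hc
    · rw [h.2.1 c w hc, abs_of_nonneg hc]
      nlinarith [h.1 w, h.1 (-w)]
    · have hrw : c • w = (-c) • (-w) := by rw [neg_smul, smul_neg, neg_neg]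
      rw [hrw, h.2.1 (-c) (-w) (by linarith), abs_of_neg hc]
      nlinarith [h.1 w, h.1 (-w)]
  -- coordinate bounds
  have hcoord : ∀ i, ∃ Ci : ℝ, 0 ≤ Ci ∧ ∀ v, |b.coord i v| ≤ Ci * ‖v‖ := by
    intro i
    refine ⟨‖LinearMap.toContinuousLinearMap (b.coord i)‖, norm_nonneg _, fun v => ?_⟩
    have := (LinearMap.toContinuousLinearMap (b.coord i)).le_opNorm v
    simpa [Real.norm_eq_abs] using this
  choose Cc hCc0 hCc using hcoord
  have hMnn : ∀ i, (0:ℝ) ≤ Φ (b i) + Φ (-(b i)) := fun i => add_nonneg (h.1 _) (h.1 _)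
  set S : ℝ := ∑ i, Cc i * (Φ (b i) + Φ (-(b i))) with hS
  have hSnn : 0 ≤ S := Finset.sum_nonneg fun i _ => mul_nonneg (hCc0 i) (hMnn i)
  refine ⟨1 + S, by linarith, fun v => ?_⟩
  have h0 : Φ v = Φ (∑ i, b.equivFun v i • b i) := by rw [b.sum_equivFun]
  have h1 : Φ v ≤ ∑ i, Φ (b.equivFun v i • b i) := h0 ▸ hsum Finset.univ _
  have h2 : ∀ i, Φ (b.equivFun v i • b i) ≤ (Cc i * (Φ (b i) + Φ (-(b i)))) * ‖v‖ := by
    intro i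
    have ha := habs (b.equivFun v i) (b i)
    have hb2 : |b.equivFun v i| ≤ Cc i * ‖v‖ := by
      have := hCc i v
      simpa [Basis.equivFun_apply, Basis.coord_apply] using this
    calc Φ (b.equivFun v i • b i) ≤ |b.equivFun v i| * (Φ (b i) + Φ (-(b i))) := ha
    _ ≤ (Cc i * ‖v‖) * (Φ (b i) + Φ (-(b i))) := mul_le_mul_of_nonneg_right hb2 (hMnn i)
    _ = (Cc i * (Φ (b i) + Φ (-(b i)))) * ‖v‖ := by ring
  have h3 : Φ v ≤ S * ‖v‖ := by
    calc Φ v ≤ ∑ i, Φ (b.equivFun v i • b i) := h1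
    _ ≤ ∑ i, (Cc i * (Φ (b i) + Φ (-(b i)))) * ‖v‖ := Finset.sum_le_sum fun i _ => h2 i
    _ = S * ‖v‖ := by rw [hS, Finset.sum_mul]
  have : S * ‖v‖ ≤ (1 + S) * ‖v‖ :=
    mul_le_mul_of_nonneg_right (by linarith) (norm_nonneg v)
  linarith

lemma mink_continuous [FiniteDimensional ℝ E] {Φ : E → ℝ} (h : IsMinkowskiSeminorm Φ) :
    Continuous Φ := by
  obtain ⟨C, hC0, hC⟩ := mink_le_norm h
  have key : ∀ u v : E, Φ u - Φ v ≤ C * ‖u - v‖ := by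
    intro u v
    have h1 : Φ (v + (u - v)) ≤ Φ v + Φ (u - v) := h.2.2 v (u - v)
    rw [add_sub_cancel] at h1
    have := hC (u - v)
    linarith
  rw [Metric.continuous_iff]
  intro x ε hε
  refine ⟨ε / C, by positivity, fun y hy => ?_⟩
  rw [Real.dist_eq, abs_sub_lt_iff]
  rw [dist_eq_norm] at hy
  have h1 := key y x
  have h2 := key x y
  have h3 : ‖x - y‖ = ‖y - x‖ := norm_sub_rev x y
  have h4 : C * ‖y - x‖ < C * (ε / C) := by
    apply mul_lt_mul_of_pos_left hy hC0
  have h5 : C * (ε / C) = ε := by field_simp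
  constructor <;> nlinarith
lemma mink_compact [FiniteDimensional ℝ E] {Φ : E → ℝ} (h : IsMinkowskiNorm Φ) :
    IsCompact {v : E | Φ v ≤ 1} := by
  have hclosed : IsClosed {v : E | Φ v ≤ 1} :=
    isClosed_le (mink_continuous h.1) continuous_const
  rcases subsingleton_or_nontrivial E with hs | hn
  · exact isCompact_singleton.of_isClosed_subset hclosed
      (fun v _ => by rw [Set.mem_singleton_iff]; exact Subsingleton.elim v (0:E))
  · obtain ⟨v₀, hv₀, hmin⟩ := (isCompact_sphere (0:E) 1).exists_isMinOn
      (NormedSpace.sphere_nonempty.mpr zero_le_one) (mink_continuous h.1).continuousOn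
    rw [mem_sphere_zero_iff_norm] at hv₀
    rw [isMinOn_iff] at hmin
    have hv₀ne : v₀ ≠ 0 := by intro h0; rw [h0] at hv₀; simp at hv₀
    have hc : 0 < Φ v₀ := h.2 v₀ hv₀ne
    apply (isCompact_closedBall (0:E) (Φ v₀)⁻¹).of_isClosed_subset hclosed
    intro v hv
    rw [Metric.mem_closedBall, dist_zero_right]
    rcases eq_or_ne v 0 with rfl | hne
    · simp [inv_nonneg.mpr hc.le]
    · have hnv : (0:ℝ) < ‖v‖ := norm_pos_iff.mpr hne
      have h1 : Φ v₀ ≤ Φ (‖v‖⁻¹ • v) := by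
        apply hmin
        rw [mem_sphere_zero_iff_norm, norm_smul, norm_inv, norm_norm]
        field_simp
      have h2 : Φ (‖v‖⁻¹ • v) = ‖v‖⁻¹ * Φ v := h.1.2.1 _ _ (by positivity)
      have hvB : Φ v ≤ 1 := hv
      rw [h2] at h1
      have h3 : Φ v₀ * ‖v‖ ≤ Φ v := by
        calc Φ v₀ * ‖v‖ ≤ (‖v‖⁻¹ * Φ v) * ‖v‖ := mul_le_mul_of_nonneg_right h1 hnv.le
        _ = Φ v := by field_simp
      calc ‖v‖ = (Φ v₀)⁻¹ * (Φ v₀ * ‖v‖) := by field_simp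
      _ ≤ (Φ v₀)⁻¹ * 1 := by
          apply mul_le_mul_of_nonneg_left _ (inv_nonneg.mpr hc.le)
          linarith
      _ = (Φ v₀)⁻¹ := mul_one _

end MinkAux

lemma lemma1 {E : Type*} [NormedAddCommGroup E] [NormedSpace ℝ E] [FiniteDimensional ℝ E]
    (k : ℕ) (hdim : Module.finrank ℝ E = k + 1)
    {Φ : E → ℝ} (hΦ : IsMinkowskiNorm Φ) {B : Set E} (hB : B = {v : E | Φ v ≤ 1})
    (X' : Submodule ℝ E)
    (h : IsLocallyCylindricalNear k B X') :
    ∃ y : E, y ∉ X' ∧ ∃ ε : ℝ, 0 < ε ∧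
      ∀ x ∈ B ∩ (X' : Set E), ∀ t : ℝ, |t| ≤ ε → x + t • y ∈ B := by
  obtain ⟨C, ⟨K₀, X₀, hX₀rank, hK₀X₀, _, _, _, Y₀, hcompl, hC⟩, U, hUopen, hXU, hBU⟩ := h
  -- `Y₀` is nonzero
  have hY₀ne : Y₀ ≠ ⊥ := by
    intro h0
    rw [h0] at hcompl
    have : X₀ = ⊤ := by
      have := hcompl.codisjoint
      rwa [codisjoint_iff, sup_bot_eq] at this
    rw [this, finrank_top] at hX₀rank
    omega
  obtain ⟨y₀, hy₀Y₀, hy₀ne⟩ := (Submodule.ne_bot_iff Y₀).mp hY₀ne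
  -- 0 ∈ K₀
  have h0B : (0:E) ∈ B := by rw [hB]; simp [mink_zero hΦ.1]
  have h0U : (0:E) ∈ U := hXU X'.zero_mem
  have h0C : (0:E) ∈ C := by
    have : (0:E) ∈ B ∩ U := ⟨h0B, h0U⟩
    rw [hBU] at this
    exact this.1
  have h0K₀ : (0:E) ∈ K₀ := by
    rw [hC, Set.mem_add] at h0C
    obtain ⟨κ, hκ, y, hy, hsum⟩ := h0C
    have hyκ : y = -κ := by linear_combination (norm := module) hsum
    have hκY₀ : κ ∈ Y₀ := by
      have := Y₀.neg_mem hy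
      rwa [hyκ, neg_neg] at this
    have : κ ∈ X₀ ⊓ Y₀ := ⟨hK₀X₀ hκ, hκY₀⟩
    rw [hcompl.inf_eq_bot] at this
    rw [Submodule.mem_bot] at this
    rw [this] at hκ
    exact hκ
  -- y₀ ∉ X'
  have hy₀X' : y₀ ∉ X' := by
    intro hy₀X'
    have hΦy₀ : 0 < Φ y₀ := hΦ.2 y₀ hy₀ne
    have htpos : (0:ℝ) < 2 / Φ y₀ := by positivity
    have h1 : (2 / Φ y₀) • y₀ ∈ C := by
      rw [hC]
      simpa using Set.add_mem_add h0K₀ (Y₀.smul_mem (2 / Φ y₀) hy₀Y₀)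
    have h2 : (2 / Φ y₀) • y₀ ∈ U := hXU (X'.smul_mem _ hy₀X')
    have h3 : (2 / Φ y₀) • y₀ ∈ B := by
      have : (2 / Φ y₀) • y₀ ∈ C ∩ U := ⟨h1, h2⟩
      rw [← hBU] at this
      exact this.1
    rw [hB, Set.mem_setOf_eq] at h3
    have h4 : Φ ((2 / Φ y₀) • y₀) = (2 / Φ y₀) * Φ y₀ := hΦ.1.2.1 _ y₀ htpos.le
    rw [h4] at h3
    rw [div_mul_cancel₀] at h3
    · norm_num at h3
    · exact ne_of_gt hΦy₀
  -- compactness of B ∩ X'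
  have hK'cpt : IsCompact (B ∩ (X' : Set E)) := by
    rw [hB]
    exact (mink_compact hΦ).inter_right X'.closed_of_finiteDimensional
  have hK'U : B ∩ (X' : Set E) ⊆ U := fun x hx => hXU hx.2
  obtain ⟨δ, hδpos, hthick⟩ := hK'cpt.exists_thickening_subset_open hUopen hK'U
  refine ⟨y₀, hy₀X', δ / (‖y₀‖ + 1), by positivity, fun x hx t ht => ?_⟩
  have hxU : x ∈ U := hK'U hx
  have hxC : x ∈ C := by
    have : x ∈ B ∩ U := ⟨hx.1, hxU⟩
    rw [hBU] at this
    exact this.1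
  -- x + t • y₀ ∈ C
  have hmemC : x + t • y₀ ∈ C := by
    rw [hC] at hxC ⊢
    rw [Set.mem_add] at hxC
    obtain ⟨κ, hκ, y, hy, hsum⟩ := hxC
    have : x + t • y₀ = κ + (y + t • y₀) := by rw [← hsum]; abel
    rw [this]
    exact Set.add_mem_add hκ (Y₀.add_mem hy (Y₀.smul_mem t hy₀Y₀))
  -- x + t • y₀ ∈ U
  have hmemU : x + t • y₀ ∈ U := by
    apply hthick
    rw [Metric.mem_thickening_iff]
    refine ⟨x, hx, ?_⟩
    rw [dist_eq_norm]
    have h1 : ‖x + t • y₀ - x‖ = |t| * ‖y₀‖ := by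
      rw [add_sub_cancel_left, norm_smul, Real.norm_eq_abs]
    rw [h1]
    have h2 : |t| * ‖y₀‖ ≤ (δ / (‖y₀‖ + 1)) * ‖y₀‖ :=
      mul_le_mul_of_nonneg_right ht (norm_nonneg _)
    have h3 : (δ / (‖y₀‖ + 1)) * ‖y₀‖ < δ := by
      rw [div_mul_eq_mul_div, div_lt_iff₀ (by positivity)]
      nlinarith [norm_nonneg y₀]
    linarith
  have : x + t • y₀ ∈ C ∩ U := ⟨hmemC, hmemU⟩
  rw [← hBU] at this
  exact this.1


set_option maxHeartbeats 2000000

/-- **Local cylindricity in codimension-one subspaces.** If for every `(k+1)`-dimensional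
subspace `W` containing the `k`-dimensional subspace `X` the section `B ∩ W` is locally
cylindrical near `X` inside `W`, then `B` is locally cylindrical near `X`. -/
theorem locally_cylindrical_in_subspaces
    {V : Type*} [NormedAddCommGroup V] [NormedSpace ℝ V] [FiniteDimensional ℝ V]
    (n k : ℕ) (hn : Module.finrank ℝ V = n) (hkn : k < n)
    (Φ : V → ℝ) (hΦ : IsMinkowskiNorm Φ) (B : Set V) (hB : B = {v | Φ v ≤ 1})
    (X : Submodule ℝ V) (hX : Module.finrank ℝ X = k)
    (h : ∀ W : Submodule ℝ V, Module.finrank ℝ W = k + 1 → X ≤ W →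
      IsLocallyCylindricalNear k (((↑) : W → V) ⁻¹' B) (X.comap W.subtype)) :
    IsLocallyCylindricalNear k B X := by
  classical
  have hmem : ∀ v : V, v ∈ B ↔ Φ v ≤ 1 := fun v => by rw [hB]; exact Iff.rfl
  have hBconv : Convex ℝ B := hB ▸ mink_convex hΦ.1
  have hBcpt : IsCompact B := hB ▸ mink_compact hΦ
  obtain ⟨CΦ, hCΦ0, hCΦ⟩ := mink_le_norm hΦ.1
  set K : Set V := B ∩ (X : Set V) with hK
  have hKsubX : K ⊆ (X : Set V) := Set.inter_subset_right
  have hKsubB : K ⊆ B := Set.inter_subset_left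
  have hXconv : Convex ℝ (X : Set V) := fun x hx y hy a b _ _ _ =>
    X.add_mem (X.smul_mem a hx) (X.smul_mem b hy)
  have hKcpt : IsCompact K := hBcpt.inter_right X.closed_of_finiteDimensional
  have hKconv : Convex ℝ K := hBconv.inter hXconv
  -- a complement of `X` and a basis of it
  obtain ⟨Z₀, hZcompl⟩ := Submodule.exists_isCompl X
  have hZdis : X ⊓ Z₀ = ⊥ := hZcompl.inf_eq_bot
  obtain ⟨m, hm⟩ : ∃ m, finrank ℝ ↥Z₀ = m := ⟨_, rfl⟩
  obtain ⟨bZ⟩ : Nonempty (Basis (Fin m) ℝ ↥Z₀) :=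
    ⟨Module.finBasisOfFinrankEq ℝ ↥Z₀ hm⟩
  have hz_notX : ∀ i, ((bZ i : V)) ∉ X := by
    intro i hmemX
    have h0 : (bZ i : V) ∈ X ⊓ Z₀ := ⟨hmemX, (bZ i).2⟩
    rw [hZdis, Submodule.mem_bot] at h0
    exact bZ.ne_zero i (Subtype.ext h0)
  have hz_ne : ∀ i, (bZ i : V) ≠ 0 := fun i h0 => hz_notX i (h0 ▸ X.zero_mem)
  -- each `X ⊔ span {z i}` has dimension `k + 1`
  have hWrank : ∀ i, finrank ℝ ↥(X ⊔ Submodule.span ℝ {(bZ i : V)}) = k + 1 := by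
    intro i
    have hinf : X ⊓ Submodule.span ℝ {(bZ i : V)} = ⊥ := by
      rw [eq_bot_iff]
      rintro v ⟨hv1, hv2⟩
      obtain ⟨a, rfl⟩ := Submodule.mem_span_singleton.mp hv2
      rcases eq_or_ne a 0 with rfl | ha
      · simp
      · exfalso
        apply hz_notX i
        have := X.smul_mem a⁻¹ hv1
        rwa [smul_smul, inv_mul_cancel₀ ha, one_smul] at this
    have hs := Submodule.finrank_sup_add_finrank_inf_eq X (Submodule.span ℝ {(bZ i : V)})
    rw [hinf, finrank_bot, hX, finrank_span_singleton (hz_ne i)] at hs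
    omega
  -- apply lemma1 in each `W i`
  have key : ∀ i : Fin m, ∃ y : V, (y - bZ i) ∈ X ∧ ∃ ε : ℝ, 0 < ε ∧
      ∀ x ∈ K, ∀ t : ℝ, |t| ≤ ε → x + t • y ∈ B := by
    intro i
    set z : V := (bZ i : V) with hz
    set W : Submodule ℝ V := X ⊔ Submodule.span ℝ {z} with hW
    have hXW : X ≤ W := le_sup_left
    have hloc := h W (hWrank i) hXW
    have hres : IsMinkowskiNorm (fun w : ↥W => Φ (w : V)) := by
      refine ⟨⟨fun v => hΦ.1.1 _, fun c v hc => ?_, fun v w => ?_⟩, fun v hv => ?_⟩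
      · simpa using hΦ.1.2.1 c (v : V) hc
      · simpa using hΦ.1.2.2 (v : V) (w : V)
      · exact hΦ.2 (v : V) (fun h0 => hv (Subtype.ext h0))
    have hB' : (((↑) : W → V) ⁻¹' B) = {w : ↥W | Φ (w : V) ≤ 1} := by
      ext w; rw [Set.mem_preimage, hmem]; exact Iff.rfl
    obtain ⟨y', hy'X, ε, hε, hseg⟩ :=
      lemma1 k (hWrank i) hres hB' (X.comap W.subtype) hloc
    have hy'VX : (y' : V) ∉ X := fun hc => hy'X (Submodule.mem_comap.mpr hc)
    have hy'W : (y' : V) ∈ W := y'.2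
    rw [hW, Submodule.mem_sup] at hy'W
    obtain ⟨ξ, hξX, w, hwz, hsum⟩ := hy'W
    rw [Submodule.mem_span_singleton] at hwz
    obtain ⟨c, rfl⟩ := hwz
    have hc : c ≠ 0 := by
      rintro rfl
      apply hy'VX
      rw [← hsum, zero_smul, add_zero]
      exact hξX
    refine ⟨c⁻¹ • (y' : V), ?_, ε * |c|, by positivity, ?_⟩
    · have : c⁻¹ • (y' : V) - z = c⁻¹ • ξ := by
        rw [← hsum, smul_add, smul_smul, inv_mul_cancel₀ hc, one_smul]
        abel
      rw [this]
      exact X.smul_mem _ hξX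
    · intro x hx t ht
      have hxW : x ∈ W := hXW hx.2
      set x' : ↥W := ⟨x, hxW⟩ with hx'
      have hx'B : x' ∈ ((↑) : W → V) ⁻¹' B := hx.1
      have hx'X : x' ∈ X.comap W.subtype := Submodule.mem_comap.mpr hx.2
      have habs : |t * c⁻¹| ≤ ε := by
        have hcpos : 0 < |c| := abs_pos.mpr hc
        rw [abs_mul, abs_inv]
        have h1 : |t| * |c|⁻¹ ≤ (ε * |c|) * |c|⁻¹ :=
          mul_le_mul_of_nonneg_right ht (by positivity)
        have h2 : (ε * |c|) * |c|⁻¹ = ε := by field_simp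
        linarith
      have := hseg x' ⟨hx'B, hx'X⟩ (t * c⁻¹) habs
      rw [Set.mem_preimage] at this
      have hcoe : ((x' + (t * c⁻¹) • y' : ↥W) : V) = x + (t * c⁻¹) • (y' : V) := by
        simp
        rfl
      rw [hcoe] at this
      rw [smul_smul]
      exact this
  choose y hyX εs hεs hseg using key
  -- the linear map sending `Z₀` onto the cylinder directions
  set f : ↥Z₀ →ₗ[ℝ] V := bZ.constr ℝ y with hf
  have hfb : ∀ i, f (bZ i) = y i := fun i => bZ.constr_basis ℝ y i
  have hfz : ∀ z : ↥Z₀, f z - (z : V) ∈ X := by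
    have hle : (⊤ : Submodule ℝ ↥Z₀) ≤ Submodule.comap (f - Z₀.subtype) X := by
      rw [← bZ.span_eq, Submodule.span_le]
      rintro _ ⟨i, rfl⟩
      rw [SetLike.mem_coe, Submodule.mem_comap, LinearMap.sub_apply, hfb]
      exact hyX i
    intro z
    have := hle (Submodule.mem_top : z ∈ ⊤)
    rwa [Submodule.mem_comap, LinearMap.sub_apply] at this
  have hfinj : Function.Injective f := by
    rw [injective_iff_map_eq_zero]
    intro z hz
    have h1 : (z : V) ∈ X := by
      have := hfz z
      rw [hz, zero_sub] at this
      have := X.neg_mem this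
      rwa [neg_neg] at this
    have h2 : (z : V) ∈ X ⊓ Z₀ := ⟨h1, z.2⟩
    rw [hZdis, Submodule.mem_bot] at h2
    exact Subtype.ext h2
  set Y : Submodule ℝ V := LinearMap.range f with hY
  have hXYbot : X ⊓ Y = ⊥ := by
    rw [eq_bot_iff]
    rintro v ⟨hvX, hvY⟩
    obtain ⟨z, rfl⟩ := hvY
    have h1 : (z : V) ∈ X := by
      have h2 := X.sub_mem hvX (hfz z)
      have h3 : f z - (f z - (z:V)) = (z : V) := by abel
      rwa [h3] at h2
    have h2 : (z : V) ∈ X ⊓ Z₀ := ⟨h1, z.2⟩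
    rw [hZdis, Submodule.mem_bot] at h2
    rw [Submodule.mem_bot, show z = 0 from Subtype.ext h2, map_zero]
  have hsum_top : X ⊔ Y = ⊤ := by
    apply Submodule.eq_top_of_finrank_eq
    have h1 := Submodule.finrank_sup_add_finrank_inf_eq X Y
    rw [hXYbot, finrank_bot] at h1
    have h2 : finrank ℝ ↥Y = finrank ℝ ↥Z₀ := LinearMap.finrank_range_of_inj hfinj
    have h3 := Submodule.finrank_add_eq_of_isCompl hZcompl
    rw [hn] at h3
    omega
  have hcompl : IsCompl X Y := ⟨disjoint_iff.mpr hXYbot, codisjoint_iff.mpr hsum_top⟩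
  -- the convexity engine
  have hfz_sum : ∀ z : ↥Z₀, f z = ∑ i, (bZ.coord i z) • y i := by
    intro z
    rw [Basis.constr_apply_fintype]
    exact Finset.sum_congr rfl fun i _ => by
      rw [Basis.equivFun_apply, Basis.coord_apply]
  have hS : ∀ c : Fin m → ℝ, (∑ i, |c i|) ≤ 1 → ∀ x ∈ K,
      x + (∑ i, (c i * εs i) • y i) ∈ B := by
    intro c hc x hx
    set S : Set V := {w : V | ∀ x ∈ K, x + w ∈ B} with hSdef
    have hSconv : Convex ℝ S := by
      intro w₁ hw₁ w₂ hw₂ a b ha hb hab x hxK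
      have hx1 : x = a • x + b • x := by rw [← add_smul, hab, one_smul]
      have hrw : x + (a • w₁ + b • w₂) = a • (x + w₁) + b • (x + w₂) := by
        conv_lhs => rw [hx1]
        rw [smul_add, smul_add]
        abel
      rw [hrw]
      exact hBconv (hw₁ x hxK) (hw₂ x hxK) ha hb hab
    have hS0 : (0 : V) ∈ S := fun x hxK => by
      rw [add_zero]; exact hKsubB hxK
    have hSi : ∀ i, (εs i) • y i ∈ S ∧ -((εs i) • y i) ∈ S := by
      intro i
      constructor
      · intro x hxK
        exact hseg i x hxK (εs i) (by rw [abs_of_pos (hεs i)])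
      · intro x hxK
        have := hseg i x hxK (-(εs i)) (by rw [abs_neg, abs_of_pos (hεs i)])
        rwa [neg_smul] at this
    -- convex combination
    set wts : Option (Fin m) → ℝ := fun j => j.elim (1 - ∑ i, |c i|) (fun i => |c i|) with hwts
    set pts : Option (Fin m) → V := fun j =>
      j.elim 0 (fun i => if 0 ≤ c i then (εs i) • y i else -((εs i) • y i)) with hpts
    have hmem2 : (∑ j : Option (Fin m), wts j • pts j) ∈ S := by
      apply hSconv.sum_mem
      · rintro (_ | i) _
        · simpa [hwts] using hc
        · simp [hwts, abs_nonneg]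
      · rw [Fintype.sum_option]
        simp [hwts]
      · rintro (_ | i) _
        · exact hS0
        · by_cases hci : 0 ≤ c i
          · simpa [hpts, hci] using (hSi i).1
          · simpa [hpts, hci] using (hSi i).2
    have hsum_eq : (∑ j : Option (Fin m), wts j • pts j) = ∑ i, (c i * εs i) • y i := by
      rw [Fintype.sum_option]
      have h0 : wts none • pts none = 0 := by simp [hwts, hpts]
      rw [h0, zero_add]
      apply Finset.sum_congr rfl
      intro i _
      by_cases hci : 0 ≤ c i
      · simp only [hwts, hpts, Option.elim, hci, if_true]
        rw [abs_of_nonneg hci]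
        module
      · simp only [hwts, hpts, Option.elim, hci, if_false]
        rw [abs_of_neg (not_le.mp hci)]
        module
    rw [hsum_eq] at hmem2
    exact hmem2 x hx
  -- projections and coordinates
  set π : V →ₗ[ℝ] ↥Z₀ := Z₀.linearProjOfIsCompl X hZcompl.symm with hπ
  have hπX : ∀ v ∈ X, π v = 0 := fun v hv =>
    Submodule.linearProjOfIsCompl_apply_right hZcompl.symm ⟨v, hv⟩
  have hπZ : ∀ z : ↥Z₀, π (z : V) = z := fun z =>
    Submodule.linearProjOfIsCompl_apply_left hZcompl.symm z
  have hπf : ∀ z : ↥Z₀, π (f z) = z := by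
    intro z
    have h1 : f z = (z : V) + (f z - (z : V)) := by abel
    rw [h1, map_add, hπZ, hπX _ (hfz z), add_zero]
  set lam : Fin m → V →ₗ[ℝ] ℝ := fun i => (bZ.coord i).comp π with hlamdef
  have hlam : ∀ x ∈ X, ∀ z : ↥Z₀, ∀ i, lam i (x + f z) = bZ.coord i z := by
    intro x hxX z i
    simp only [hlamdef, LinearMap.comp_apply, map_add, hπX x hxX, hπf, map_zero, zero_add]
  have hlamX : ∀ x ∈ X, ∀ i, lam i x = 0 := by
    intro x hxX i
    simp only [hlamdef, LinearMap.comp_apply, hπX x hxX, map_zero]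
  set U : Set V := {v : V | (∑ i, (εs i)⁻¹ * |lam i v|) < 1} with hU
  have hUopen : IsOpen U := by
    apply isOpen_lt _ continuous_const
    exact continuous_finset_sum _ fun i _ =>
      continuous_const.mul ((lam i).continuous_of_finiteDimensional.abs)
  have hXU : (X : Set V) ⊆ U := by
    intro x hxX
    have : ∀ i, (εs i)⁻¹ * |lam i x| = 0 := by
      intro i; rw [hlamX x hxX i, abs_zero, mul_zero]
    simp only [hU, Set.mem_setOf_eq]
    rw [Finset.sum_congr rfl fun i _ => this i]
    simp
  -- interior of the base is nonempty in `X`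
  have hint : (interior ((↑) ⁻¹' K : Set X)).Nonempty := by
    have hsub : Metric.ball (0 : ↥X) CΦ⁻¹ ⊆ ((↑) ⁻¹' K : Set X) := by
      intro x hxball
      rw [Metric.mem_ball, dist_zero_right] at hxball
      have h1 : Φ (x : V) ≤ CΦ * ‖(x : V)‖ := hCΦ _
      have h2 : ‖(x : V)‖ = ‖x‖ := rfl
      have h3 : CΦ * ‖x‖ < CΦ * CΦ⁻¹ := mul_lt_mul_of_pos_left hxball hCΦ0
      rw [mul_inv_cancel₀ (ne_of_gt hCΦ0)] at h3
      refine ⟨(hmem _).mpr ?_, x.2⟩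
      rw [h2] at h1
      linarith
    exact ⟨0, interior_maximal hsub Metric.isOpen_ball (Metric.mem_ball_self (by positivity))⟩
  -- conclusion
  refine ⟨K + (Y : Set V), ⟨K, X, hX, hKsubX, hKcpt, hKconv, hint, Y, hcompl, rfl⟩,
    U, hUopen, hXU, ?_⟩
  ext v
  simp only [Set.mem_inter_iff]
  constructor
  · rintro ⟨hvB, hvU⟩
    refine ⟨?_, hvU⟩
    have hvtop : v ∈ X ⊔ Y := by rw [hsum_top]; exact Submodule.mem_top
    obtain ⟨x, hxX, w, hwY, hxw⟩ := Submodule.mem_sup.mp hvtop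
    obtain ⟨z, rfl⟩ := LinearMap.mem_range.mp hwY
    have hxK : x ∈ K := by
      refine ⟨(hmem _).mpr ?_, hxX⟩
      by_cases hz0 : z = 0
      · subst hz0
        rw [map_zero, add_zero] at hxw
        subst hxw
        exact (hmem _).mp hvB
      by_contra hΦx
      push_neg at hΦx
      set d : Fin m → ℝ := fun i => bZ.coord i z with hd
      have hdne : ∃ i, d i ≠ 0 := by
        by_contra hall
        push_neg at hall
        apply hz0
        apply bZ.ext_elem
        intro i
        have := hall i
        rw [hd] at this
        simp only [Basis.coord_apply] at this
        simpa using this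
      obtain ⟨i₀, hi₀⟩ := hdne
      set s : ℝ := ∑ i, (εs i)⁻¹ * |d i| with hs
      have hspos : 0 < s := by
        have h1 : (εs i₀)⁻¹ * |d i₀| ≤ s := by
          apply Finset.single_le_sum (fun i _ => ?_) (Finset.mem_univ i₀)
          exact mul_nonneg (inv_nonneg.mpr (hεs i).le) (abs_nonneg _)
        have h2 : 0 < (εs i₀)⁻¹ * |d i₀| := by
          have := hεs i₀
          have := abs_pos.mpr hi₀
          positivity
        linarith
      obtain ⟨δ, hδpos, hδs⟩ : ∃ δ : ℝ, 0 < δ ∧ δ * s = 1 :=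
        ⟨s⁻¹, inv_pos.mpr hspos, inv_mul_cancel₀ (ne_of_gt hspos)⟩
      obtain ⟨c, hcsum, hcprod⟩ : ∃ c : Fin m → ℝ, (∑ i, |c i|) ≤ 1 ∧
          ∀ i, c i * εs i = -(δ * d i) := by
        refine ⟨fun i => -(δ * ((εs i)⁻¹ * d i)), ?_, ?_⟩
        · have hcabs : ∀ i, |(-(δ * ((εs i)⁻¹ * d i)))| = δ * ((εs i)⁻¹ * |d i|) := by
            intro i
            rw [abs_neg, abs_mul, abs_mul, abs_of_pos hδpos, abs_inv,
              abs_of_pos (hεs i)]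
          rw [Finset.sum_congr rfl fun i _ => hcabs i, ← Finset.mul_sum, ← hs, hδs]
        · intro i
          have hne : εs i ≠ 0 := ne_of_gt (hεs i)
          field_simp
      have hsum_id : (∑ i, (c i * εs i) • y i) = -(δ • f z) := by
        have h1 : ∀ i, (c i * εs i) • y i = -((δ * d i) • y i) := by
          intro i
          rw [← neg_smul, hcprod i]
        rw [Finset.sum_congr rfl fun i _ => h1 i, Finset.sum_neg_distrib]
        congr 1
        rw [hfz_sum z, Finset.smul_sum]
        exact Finset.sum_congr rfl fun i _ => by rw [smul_smul]
      have hΦx0 : 0 < Φ x := lt_trans one_pos hΦx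
      set κ₀ : V := (Φ x)⁻¹ • x with hκ₀
      have hκ₀K : κ₀ ∈ K := by
        refine ⟨(hmem _).mpr ?_, X.smul_mem _ hxX⟩
        rw [hκ₀, hΦ.1.2.1 _ _ (inv_nonneg.mpr hΦx0.le),
          inv_mul_cancel₀ (ne_of_gt hΦx0)]
      have hq : κ₀ - δ • f z ∈ B := by
        have := hS c hcsum κ₀ hκ₀K
        rwa [hsum_id, ← sub_eq_add_neg] at this
      obtain ⟨lam₀, hlam₀pos, hlam₀lt, hscalar⟩ :
          ∃ l : ℝ, 0 < l ∧ l < 1 ∧ l - (1 - l) * δ = 0 := by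
        refine ⟨δ / (1 + δ), by positivity, ?_, by field_simp; ring⟩
        rw [div_lt_one (by positivity)]
        linarith
      have hpB : lam₀ • v + (1 - lam₀) • (κ₀ - δ • f z) ∈ B :=
        hBconv hvB hq hlam₀pos.le (by linarith) (by ring)
      have hp : lam₀ • v + (1 - lam₀) • (κ₀ - δ • f z)
          = (lam₀ + (1 - lam₀) * (Φ x)⁻¹) • x := by
        rw [← hxw, hκ₀]
        match_scalars
        · ring
        · linear_combination hscalar
      rw [hp] at hpB
      rw [hmem] at hpB
      have hcoefnn : 0 ≤ lam₀ + (1 - lam₀) * (Φ x)⁻¹ := by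
        have h1 : (0:ℝ) ≤ 1 - lam₀ := by linarith
        have h2 : (0:ℝ) ≤ (Φ x)⁻¹ := inv_nonneg.mpr hΦx0.le
        nlinarith
      rw [hΦ.1.2.1 _ _ hcoefnn] at hpB
      have hexpand : (lam₀ + (1 - lam₀) * (Φ x)⁻¹) * Φ x = lam₀ * Φ x + (1 - lam₀) := by
        field_simp
      rw [hexpand] at hpB
      nlinarith
    rw [← hxw]
    exact Set.add_mem_add hxK (LinearMap.mem_range_self f z)
  · rintro ⟨hvC, hvU⟩
    refine ⟨?_, hvU⟩
    rw [Set.mem_add] at hvC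
    obtain ⟨x, hxK, w, hwY, hxw⟩ := hvC
    rw [SetLike.mem_coe] at hwY
    obtain ⟨z, rfl⟩ := LinearMap.mem_range.mp hwY
    set d : Fin m → ℝ := fun i => bZ.coord i z with hd
    have hvlam : ∀ i, lam i v = d i := by
      intro i
      rw [← hxw]
      exact hlam x (hKsubX hxK) z i
    rw [hU, Set.mem_setOf_eq, Finset.sum_congr rfl fun i _ => by rw [hvlam i]] at hvU
    set c : Fin m → ℝ := fun i => (εs i)⁻¹ * d i with hcdef
    have hcsum : (∑ i, |c i|) ≤ 1 := by
      apply le_of_lt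
      calc (∑ i, |c i|) = ∑ i, (εs i)⁻¹ * |d i| := by
            apply Finset.sum_congr rfl
            intro i _
            rw [hcdef, abs_mul, abs_inv, abs_of_pos (hεs i)]
      _ < 1 := hvU
    have hsum_id : (∑ i, (c i * εs i) • y i) = f z := by
      have h1 : ∀ i, (c i * εs i) • y i = d i • y i := by
        intro i
        congr 1
        rw [hcdef]
        field_simp
        exact mul_div_cancel_left₀ (d i) (ne_of_gt (hεs i))
      rw [Finset.sum_congr rfl fun i _ => h1 i, hfz_sum z]
    have := hS c hcsum x hxK
    rwa [hsum_id, hxw] at this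
end

section
/- Let Φ be a Minkowski norm on an n-dimensional real vector space V. Let X₁, X₂ be two distinct hyperplanes ((n−1)-dimensional linear subspaces) of V and L₁, L₂ two distinct lines (1-dimensional linear subspaces) of V. Suppose X₁ is Φ-contracting with contracting direction L₁ and X₂ is Φ-contracting with contracting direction L₂. Then the (n−2)-dimensional subspace X₁ ∩ X₂ is Φ-contracting. -/
open Module Set Pointwise

private lemma real_le_of_forall_pos_le_add' {a b : ℝ} (h : ∀ ε : ℝ, 0 < ε → a ≤ b + ε) :
    a ≤ b := by
  by_contra hab
  push_neg at hab
  have := h ((a - b) / 2) (by linarith)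
  linarith

/-- Bound `Φ (t • f)` by `|t| * max (Φ f) (Φ (-f))`. -/
private lemma smul_bound {V : Type*} [AddCommGroup V] [Module ℝ V]
    {Φ : V → ℝ} (hhom : ∀ (c : ℝ) (v : V), 0 ≤ c → Φ (c • v) = c * Φ v)
    (hnn : ∀ v, 0 ≤ Φ v) (t : ℝ) (f : V) :
    Φ (t • f) ≤ |t| * max (Φ f) (Φ (-f)) := by
  rcases le_or_gt 0 t with ht | ht
  · rw [hhom t f ht, abs_of_nonneg ht]
    exact mul_le_mul_of_nonneg_left (le_max_left _ _) ht
  · have : t • f = (-t) • (-f) := by module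
    rw [this, hhom (-t) (-f) (by linarith), abs_of_neg ht]
    exact mul_le_mul_of_nonneg_left (le_max_right _ _) (by linarith)

/-- Key analytic step: if subtracting `μ x • f` never increases `Φ` on `W`,
then neither does the projection `x ↦ x - (μ x / μ f) • f`; moreover `μ f ≠ 0`. -/
private lemma key_step {V : Type*} [AddCommGroup V] [Module ℝ V]
    (Φ : V → ℝ) (hΦ : IsMinkowskiNorm Φ)
    (W : Submodule ℝ V) (μ : V →ₗ[ℝ] ℝ) (f : V)
    (hfW : f ∈ W) (hf0 : f ≠ 0)
    (hx0 : ∃ x ∈ W, μ x ≠ 0)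
    (hstep : ∀ x ∈ W, Φ (x - μ x • f) ≤ Φ x) :
    μ f ≠ 0 ∧ ∀ x ∈ W, Φ (x - (μ x / μ f) • f) ≤ Φ x := by
  obtain ⟨⟨hnn, hhom, hsub⟩, hpos⟩ := hΦ
  -- first: μ f ≠ 0 (otherwise shear contradiction)
  have hμf : μ f ≠ 0 := by
    intro hμf0
    obtain ⟨x₀, hx₀W, hx₀⟩ := hx0
    set w : V := μ x₀ • f with hw
    have hwne : w ≠ 0 := smul_ne_zero hx₀ hf0
    have hnegw : 0 < Φ (-w) := hpos _ (neg_ne_zero.2 hwne)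
    have hiter : ∀ k : ℕ, Φ (x₀ - (k : ℝ) • w) ≤ Φ x₀ := by
      intro k
      induction k with
      | zero => simp
      | succ k ih =>
        have hmem : x₀ - (k : ℝ) • w ∈ W :=
          W.sub_mem hx₀W (W.smul_mem _ (W.smul_mem _ hfW))
        have h2 := hstep _ hmem
        have hμz : μ (x₀ - (k : ℝ) • w) = μ x₀ := by
          simp [hw, map_sub, map_smul, hμf0]
        rw [hμz] at h2
        have heq : x₀ - (k : ℝ) • w - μ x₀ • f = x₀ - ((k : ℝ) + 1) • w := by
          rw [hw]; module
        rw [heq] at h2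
        push_cast
        exact h2.trans ih
    have hbound : ∀ k : ℕ, (k : ℝ) * Φ (-w) ≤ Φ x₀ + Φ (-x₀) := by
      intro k
      have heq : (k : ℝ) • (-w) = (x₀ - (k : ℝ) • w) + (-x₀) := by module
      have h1 : Φ ((k : ℝ) • (-w)) ≤ Φ (x₀ - (k : ℝ) • w) + Φ (-x₀) := by
        rw [heq]; exact hsub _ _
      rw [hhom _ _ (by positivity)] at h1
      have := hiter k
      linarith
    obtain ⟨k, hk⟩ := exists_nat_gt ((Φ x₀ + Φ (-x₀)) / Φ (-w))
    have := hbound k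
    rw [div_lt_iff₀ hnegw] at hk
    linarith
  refine ⟨hμf, ?_⟩
  set r : ℝ := 1 - μ f with hr
  have hμfr : μ f = 1 - r := by rw [hr]; ring
  -- eliminate |r| > 1
  have hΦf : 0 < Φ f := hpos _ hf0
  have hΦnf : 0 < Φ (-f) := hpos _ (neg_ne_zero.2 hf0)
  have hSf : Φ (r • f) ≤ Φ f := by
    have := hstep f hfW
    have heq : f - μ f • f = r • f := by rw [hμfr]; module
    rwa [heq] at this
  have hSnf : Φ (r • (-f)) ≤ Φ (-f) := by
    have := hstep (-f) (W.neg_mem hfW)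
    have heq : -f - μ (-f) • f = r • (-f) := by
      rw [map_neg, hμfr]; module
    rwa [heq] at this
  have habsr : |r| ≤ 1 := by
    rcases le_or_gt 0 r with hr0 | hr0
    · rw [hhom _ _ hr0] at hSf
      rw [abs_of_nonneg hr0]
      nlinarith
    · rw [abs_of_neg hr0]
      have h1 : Φ (r • f) = (-r) * Φ (-f) := by
        have : r • f = (-r) • (-f) := by module
        rw [this, hhom _ _ (by linarith)]
      have h2 : Φ (r • (-f)) = (-r) * Φ f := by
        have : r • (-f) = (-r) • f := by module
        rw [this, hhom _ _ (by linarith)]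
      rw [h1] at hSf; rw [h2] at hSnf
      nlinarith
  intro x hxW
  rcases eq_or_lt_of_le habsr with hreq | hrlt
  · -- |r| = 1; r = 1 is impossible since μ f ≠ 0, so r = -1: averaging
    have hrneg : r = -1 := by
      rcases abs_eq (by norm_num : (0:ℝ) ≤ 1) |>.mp hreq with h | h
      · exfalso; apply hμf; rw [hμfr, h]; ring
      · exact h
    have hμf2 : μ f = 2 := by rw [hμfr, hrneg]; norm_num
    have heq : x - (μ x / μ f) • f = (1/2 : ℝ) • (x + (x - μ x • f)) := by
      rw [hμf2]; module
    rw [heq, hhom _ _ (by norm_num)]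
    have := hsub x (x - μ x • f)
    have := hstep x hxW
    linarith
  · -- |r| < 1 : geometric series
    have hr1 : (1 : ℝ) - r ≠ 0 := by
      intro h; apply hμf; rw [hμfr, sub_eq_zero.mp h]; ring
    have hiter : ∀ k : ℕ, Φ (x - (μ x * (1 - r ^ k) / (1 - r)) • f) ≤ Φ x := by
      intro k
      induction k with
      | zero => simp
      | succ k ih =>
        set a : ℝ := μ x * (1 - r ^ k) / (1 - r) with ha
        have hmem : x - a • f ∈ W := W.sub_mem hxW (W.smul_mem _ hfW)
        have h2 := hstep _ hmem
        have hμz : μ (x - a • f) = μ x * r ^ k := by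
          rw [map_sub, map_smul, smul_eq_mul, hμfr, ha]
          field_simp
          ring
        rw [hμz] at h2
        have heq : x - a • f - (μ x * r ^ k) • f
            = x - (μ x * (1 - r ^ (k + 1)) / (1 - r)) • f := by
          have hco : a + μ x * r ^ k = μ x * (1 - r ^ (k + 1)) / (1 - r) := by
            rw [ha]; field_simp; ring
          rw [← hco]; module
        rw [heq] at h2
        exact h2.trans ih
    apply real_le_of_forall_pos_le_add'
    intro ε hε
    set M : ℝ := max (Φ f) (Φ (-f)) with hM
    have hM0 : 0 < M := lt_max_of_lt_left hΦf
    set C : ℝ := |μ x / (1 - r)| * M + 1 with hC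
    have hC0 : 0 < C := by positivity
    obtain ⟨k, hk⟩ := exists_pow_lt_of_lt_one (show (0:ℝ) < ε / C by positivity) hrlt
    have hdecomp : x - (μ x / μ f) • f
        = (x - (μ x * (1 - r ^ k) / (1 - r)) • f) + (-(μ x * r ^ k / (1 - r))) • f := by
      rw [hμfr]
      have : μ x / (1 - r) = μ x * (1 - r ^ k) / (1 - r) + μ x * r ^ k / (1 - r) := by
        field_simp; ring
      rw [this]; module
    rw [hdecomp]
    calc Φ _ ≤ Φ (x - (μ x * (1 - r ^ k) / (1 - r)) • f)
          + Φ ((-(μ x * r ^ k / (1 - r))) • f) := hsub _ _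
      _ ≤ Φ x + |(-(μ x * r ^ k / (1 - r)))| * M := by
          have hb := smul_bound hhom hnn (-(μ x * r ^ k / (1 - r))) f
          have hi := hiter k
          rw [← hM] at hb
          linarith
      _ ≤ Φ x + ε := by
          have habs : |(-(μ x * r ^ k / (1 - r)))| = |μ x / (1 - r)| * |r| ^ k := by
            rw [abs_neg, show μ x * r ^ k / (1 - r) = (μ x / (1 - r)) * r ^ k from by ring,
              abs_mul, abs_pow]
          rw [habs]
          have h1 : |μ x / (1 - r)| * |r| ^ k * M ≤ (C - 1) * (ε / C) := by
            have hCm1 : C - 1 = |μ x / (1 - r)| * M := by rw [hC]; ring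
            rw [hCm1]
            calc |μ x / (1 - r)| * |r| ^ k * M = (|μ x / (1 - r)| * M) * |r| ^ k := by ring
              _ ≤ (|μ x / (1 - r)| * M) * (ε / C) := by
                  apply mul_le_mul_of_nonneg_left hk.le (by positivity)
          have h2 : (C - 1) * (ε / C) ≤ ε := by
            rw [div_eq_inv_mul, ← mul_assoc]
            have : (C - 1) * C⁻¹ ≤ 1 := by
              rw [mul_inv_le_iff₀ hC0]; linarith
            nlinarith
          linarith

/-- **Dimension reduction.** If two distinct hyperplanes are `Φ`-contracting with two
distinct lines as contracting directions, then their intersection, an `(n-2)`-dimensional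
subspace, is `Φ`-contracting. -/
theorem dimension_reduction
    {V : Type*} [NormedAddCommGroup V] [NormedSpace ℝ V] [FiniteDimensional ℝ V]
    (n : ℕ) (hV : Module.finrank ℝ V = n)
    (Φ : V → ℝ) (hΦ : IsMinkowskiNorm Φ)
    (X₁ X₂ L₁ L₂ : Submodule ℝ V)
    (hX₁ : Module.finrank ℝ X₁ = n - 1) (hX₂ : Module.finrank ℝ X₂ = n - 1)
    (hXne : X₁ ≠ X₂)
    (hL₁ : Module.finrank ℝ L₁ = 1) (hL₂ : Module.finrank ℝ L₂ = 1)
    (hLne : L₁ ≠ L₂)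
    (h₁ : IsContractingWithDirection Φ X₁ L₁)
    (h₂ : IsContractingWithDirection Φ X₂ L₂) :
    Module.finrank ℝ ↥(X₁ ⊓ X₂) = n - 2 ∧ IsContracting Φ (X₁ ⊓ X₂) := by
  classical
  -- basic setup
  obtain ⟨hc₁, hq₁⟩ := h₁
  obtain ⟨hc₂, hq₂⟩ := h₂
  -- n ≥ 2
  have hn2 : 2 ≤ n := by
    by_contra hn
    push_neg at hn
    have h0 : n - 1 = 0 := by omega
    rw [h0] at hX₁ hX₂
    exact hXne ((Submodule.finrank_eq_zero.mp hX₁).trans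
      (Submodule.finrank_eq_zero.mp hX₂).symm)
  -- X₂ is not contained in X₁
  have hnle : ¬ X₂ ≤ X₁ := fun hle =>
    hXne (Submodule.eq_of_le_of_finrank_eq hle (hX₂.trans hX₁.symm)).symm
  -- dimension count
  have hsup : finrank ℝ ↥(X₁ ⊔ X₂) = n := by
    have hlt : X₁ < X₁ ⊔ X₂ :=
      lt_of_le_of_ne le_sup_left (fun h => hnle (h ▸ le_sup_right))
    have h1 : finrank ℝ X₁ < finrank ℝ ↥(X₁ ⊔ X₂) :=
      Submodule.finrank_lt_finrank_of_lt hlt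
    have h2 : finrank ℝ ↥(X₁ ⊔ X₂) ≤ n := hV ▸ Submodule.finrank_le _
    omega
  have hdim : finrank ℝ ↥(X₁ ⊓ X₂) = n - 2 := by
    have := Submodule.finrank_sup_add_finrank_inf_eq X₁ X₂
    rw [hX₁, hX₂, hsup] at this
    omega
  refine ⟨hdim, ?_⟩
  -- the two projectors as endomorphisms of V
  set P₁ : V →ₗ[ℝ] V := X₁.subtype ∘ₗ X₁.linearProjOfIsCompl L₁ hc₁ with hP₁def
  set P₂ : V →ₗ[ℝ] V := X₂.subtype ∘ₗ X₂.linearProjOfIsCompl L₂ hc₂ with hP₂def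
  have hP₁mem : ∀ x, P₁ x ∈ X₁ := fun x => (X₁.linearProjOfIsCompl L₁ hc₁ x).2
  have hP₂mem : ∀ x, P₂ x ∈ X₂ := fun x => (X₂.linearProjOfIsCompl L₂ hc₂ x).2
  have hP₁fix : ∀ x ∈ X₁, P₁ x = x := by
    intro x hx
    have h := Submodule.linearProjOfIsCompl_apply_left hc₁ (⟨x, hx⟩ : X₁)
    exact congrArg Subtype.val h
  have hP₂fix : ∀ x ∈ X₂, P₂ x = x := by
    intro x hx
    have h := Submodule.linearProjOfIsCompl_apply_left hc₂ (⟨x, hx⟩ : X₂)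
    exact congrArg Subtype.val h
  have hdec₁ : ∀ x : V, x - P₁ x = (L₁.linearProjOfIsCompl X₁ hc₁.symm x : V) :=
    fun x => sub_eq_of_eq_add'
      (Submodule.projection_add_projection_eq_self hc₁ x).symm
  have hdec₂ : ∀ x : V, x - P₂ x ∈ L₂ := fun x =>
    (sub_eq_of_eq_add'
      (Submodule.projection_add_projection_eq_self hc₂ x).symm) ▸
      (L₂.linearProjOfIsCompl X₂ hc₂.symm x).2
  -- coordinate functional with kernel X₁
  set b : Basis (Fin 1) ℝ L₁ := finBasisOfFinrankEq ℝ L₁ hL₁ with hb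
  set e₁ : V := (b 0 : V) with he₁
  set μ : V →ₗ[ℝ] ℝ := (b.coord 0) ∘ₗ (L₁.linearProjOfIsCompl X₁ hc₁.symm) with hμdef
  have he₁L : e₁ ∈ L₁ := (b 0).2
  have he₁0 : e₁ ≠ 0 := by
    simpa [he₁, Submodule.coe_eq_zero] using b.ne_zero 0
  have hrepr : ∀ y : L₁, (y : V) = (b.coord 0 y) • e₁ := by
    intro y
    have h := b.sum_repr y
    rw [Fin.sum_univ_one] at h
    calc (y : V) = ((b.repr y 0 • b 0 : L₁) : V) := by rw [h]
      _ = (b.coord 0 y) • e₁ := by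
          rw [Submodule.coe_smul, Basis.coord_apply, he₁]
  have hprojμ : ∀ x : V, (L₁.linearProjOfIsCompl X₁ hc₁.symm x : V) = μ x • e₁ :=
    fun x => hrepr _
  have hdecomp : ∀ x : V, P₁ x = x - μ x • e₁ := by
    intro x
    have := (hdec₁ x).trans (hprojμ x)
    linear_combination (norm := module) -this
  have hμ0 : ∀ x : V, μ x = 0 ↔ x ∈ X₁ := by
    intro x
    constructor
    · intro h
      have h2 : x - P₁ x = 0 := by rw [(hdec₁ x).trans (hprojμ x), h, zero_smul]
      have : x = P₁ x := by linear_combination (norm := module) h2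
      rw [this]; exact hP₁mem x
    · intro hx
      have : L₁.linearProjOfIsCompl X₁ hc₁.symm x = 0 :=
        Submodule.projectionOnto_apply_of_mem_right hc₁.symm hx
      simp [hμdef, this]
  -- the vector f and the hypotheses of key_step
  set f : V := P₂ e₁ with hf
  have hfW : f ∈ X₂ := hP₂mem e₁
  have hf0 : f ≠ 0 := by
    intro h
    have he₁L₂ : e₁ ∈ L₂ := by
      have := hdec₂ e₁
      rwa [← hf, h, sub_zero] at this
    have hs : finrank ℝ ↥(Submodule.span ℝ {e₁}) = 1 := finrank_span_singleton he₁0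
    have h1 : Submodule.span ℝ {e₁} = L₁ :=
      Submodule.eq_of_le_of_finrank_eq
        ((Submodule.span_singleton_le_iff_mem _ _).mpr he₁L) (hs.trans hL₁.symm)
    have h2 : Submodule.span ℝ {e₁} = L₂ :=
      Submodule.eq_of_le_of_finrank_eq
        ((Submodule.span_singleton_le_iff_mem _ _).mpr he₁L₂) (hs.trans hL₂.symm)
    exact hLne (h1.symm.trans h2)
  have hx0 : ∃ x ∈ X₂, μ x ≠ 0 := by
    obtain ⟨x, hxW, hxX₁⟩ := SetLike.not_le_iff_exists.mp hnle
    exact ⟨x, hxW, fun h => hxX₁ ((hμ0 x).mp h)⟩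
  have hstep : ∀ x ∈ X₂, Φ (x - μ x • f) ≤ Φ x := by
    intro x hx
    have h1 : P₂ (P₁ x) = x - μ x • f := by
      rw [hdecomp x, map_sub, map_smul, hP₂fix x hx, hf]
    have h2 : Φ (P₂ (P₁ x)) ≤ Φ (P₁ x) := hq₂ (P₁ x)
    have h3 : Φ (P₁ x) ≤ Φ x := hq₁ x
    rw [h1] at h2
    exact h2.trans h3
  obtain ⟨hμf, hQ⟩ := key_step Φ hΦ X₂ μ f hfW hf0 hx0 hstep
  -- the projector onto X₁ ⊓ X₂
  set T : V →ₗ[ℝ] V := P₂ ∘ₗ P₁ with hT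
  set P : V →ₗ[ℝ] V :=
    T - (μ f)⁻¹ • (LinearMap.toSpanSingleton ℝ V f ∘ₗ (μ ∘ₗ T)) with hP
  have hPapp : ∀ x, P x = T x - (μ (T x) / μ f) • f := by
    intro x
    simp only [hP, LinearMap.sub_apply, LinearMap.smul_apply, LinearMap.comp_apply,
      LinearMap.toSpanSingleton_apply]
    rw [smul_smul, div_eq_mul_inv, mul_comm]
  have hTmem : ∀ x, T x ∈ X₂ := fun x => hP₂mem (P₁ x)
  have hTfix : ∀ x ∈ X₁ ⊓ X₂, T x = x := by
    rintro x ⟨hx1, hx2⟩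
    simp only [hT, LinearMap.comp_apply]
    rw [hP₁fix x hx1, hP₂fix x hx2]
  have hPmem : ∀ x, P x ∈ X₁ ⊓ X₂ := by
    intro x
    constructor
    · apply (hμ0 _).mp
      rw [hPapp, map_sub, map_smul, smul_eq_mul]
      field_simp
      ring
    · rw [hPapp]
      exact X₂.sub_mem (hTmem x) (X₂.smul_mem _ hfW)
  have hPfix : ∀ x ∈ X₁ ⊓ X₂, P x = x := by
    intro x hx
    rw [hPapp, hTfix x hx, ((hμ0 x).mpr hx.1 : μ x = 0)]
    simp
  have hTcon : ∀ x, Φ (T x) ≤ Φ x := by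
    intro x
    have h2 : Φ (P₂ (P₁ x)) ≤ Φ (P₁ x) := hq₂ (P₁ x)
    exact h2.trans (hq₁ x)
  refine ⟨P, ?_, ?_, ?_⟩
  · exact LinearMap.ext fun x => hPfix (P x) (hPmem x)
  · apply le_antisymm
    · rintro y ⟨x, rfl⟩
      exact hPmem x
    · intro x hx
      exact ⟨x, hPfix x hx⟩
  · intro v
    rw [hPapp]
    exact (hQ (T v) (hTmem v)).trans (hTcon v)
end
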